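/- With all EVs present at time 0, the least-laxity-first rule with per-slot capacity c (charge the up-to-c EVs with positive remaining demand and smallest current laxity) produces a feasible schedule whenever any feasible schedule exists. -/

import Mathlib

open Finset in
/-- LLF with per-slot capacity `c` is feasibility-preserving:
all EVs present at time 0, EV `i` with demand `d i` and deadline `τ i`
(`d i ≤ τ i`).  If some feasible schedule exists (binary, at most `c` charged
per slot, nobody charged after its deadline, everyone fully charged by its
deadline), then any least-laxity-first schedule `b` — one that charges exactly
`min c (#active)` active EVs per slot (active: positive remaining demand and
before the deadline), only active EVs, with charged EVs having laxity no larger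
than any uncharged active EV — is feasible. -/
theorem llf_capacity_feasible
    (ι : Type*) [Fintype ι] [DecidableEq ι]
    (d τ : ι → ℕ) (hdτ : ∀ i, d i ≤ τ i) (c : ℕ)
    (hexists : ∃ σ : ι → ℕ → ℕ,
      (∀ i t, σ i t ≤ 1) ∧
      (∀ t, ∑ i, σ i t ≤ c) ∧
      (∀ i t, τ i ≤ t → σ i t = 0) ∧
      (∀ i, d i ≤ ∑ t ∈ range (τ i), σ i t))
    (b : ι → ℕ → ℕ)
    (hb_bin : ∀ i t, b i t ≤ 1)
    (hb_act : ∀ i t, 0 < b i t → t < τ i ∧ ∑ s ∈ range t, b i s < d i)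
    (hb_full : ∀ t, ∑ i, b i t =
      min c ((univ.filter fun i => t < τ i ∧ ∑ s ∈ range t, b i s < d i).card))
    (hb_llf : ∀ t i i',
      (t < τ i ∧ ∑ s ∈ range t, b i s < d i) → b i t = 0 → b i' t = 1 →
      ((τ i' : ℤ) - t) - ((d i' : ℤ) - ∑ s ∈ range t, (b i' s : ℤ)) ≤
        ((τ i : ℤ) - t) - ((d i : ℤ) - ∑ s ∈ range t, (b i s : ℤ))) :
    ∀ i, d i ≤ ∑ t ∈ range (τ i), b i t := by
  classical
  obtain ⟨σ, hσ1, hσc, hσd, hσfull⟩ := hexists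
  have hsum_le : ∀ i t, ∑ s ∈ range t, b i s ≤ d i := by
    intro i t
    induction t with
    | zero => simp
    | succ t ih =>
      rw [sum_range_succ]
      rcases Nat.eq_zero_or_pos (b i t) with h | h
      · omega
      · have h1 := (hb_act i t h).2
        have h2 := hb_bin i t
        omega
  have key : ∀ t, (∀ i, d i - ∑ s ∈ range t, b i s ≤ τ i - t) ∧
      (∀ T, ∑ i, ((d i - ∑ s ∈ range t, b i s) - (τ i - T)) ≤ c * (T - t)) := by
    intro t
    induction t with
    | zero =>
      constructor
      · intro i; simpa using hdτ i
      · intro T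
        have hterm : ∀ i, d i - (τ i - T) ≤ ∑ s ∈ range T, σ i s := by
          intro i
          rcases le_or_gt (τ i) T with h | h
          · have h1 : ∑ s ∈ range (τ i), σ i s ≤ ∑ s ∈ range T, σ i s :=
              sum_le_sum_of_subset (range_subset_range.2 h)
            have h2 := hσfull i; omega
          · have hsplit : ∑ s ∈ range T, σ i s + ∑ s ∈ Ico T (τ i), σ i s
                = ∑ s ∈ range (τ i), σ i s := by
              rw [range_eq_Ico, range_eq_Ico]
              exact sum_Ico_consecutive (σ i) (Nat.zero_le T) h.le
            have hico : ∑ s ∈ Ico T (τ i), σ i s ≤ τ i - T := by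
              calc ∑ s ∈ Ico T (τ i), σ i s ≤ ∑ s ∈ Ico T (τ i), 1 :=
                    sum_le_sum fun s _ => hσ1 i s
                _ = τ i - T := by simp [Nat.card_Ico]
            have h2 := hσfull i; omega
        calc ∑ i, ((d i - ∑ s ∈ range 0, b i s) - (τ i - T))
            ≤ ∑ i, ∑ s ∈ range T, σ i s := by
              apply sum_le_sum; intro i _; simpa using hterm i
          _ = ∑ s ∈ range T, ∑ i, σ i s := sum_comm
          _ ≤ ∑ s ∈ range T, c := sum_le_sum fun s _ => hσc s
          _ = c * T := by simp [mul_comm]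
    | succ t ih =>
      obtain ⟨ha, hbd⟩ := ih
      set A : Finset ι :=
        univ.filter (fun i => t < τ i ∧ ∑ s ∈ range t, b i s < d i) with hA
      set S : Finset ι := univ.filter (fun i => b i t = 1) with hS
      have hSA : S ⊆ A := by
        intro i hi
        simp only [hS, mem_filter, mem_univ, true_and] at hi
        simp only [hA, mem_filter, mem_univ, true_and]
        exact hb_act i t (by omega)
      have hScard : S.card = min c A.card := by
        have h1 : S.card = ∑ i, b i t := by
          rw [hS, card_filter]
          exact sum_congr rfl fun i _ => by have := hb_bin i t; split <;> omega
        rw [h1, hb_full t, ← hA]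
      have hcast : ∀ j, (∑ s ∈ range t, (b j s : ℤ))
          = ((∑ s ∈ range t, b j s : ℕ) : ℤ) := fun j => (Nat.cast_sum _ _).symm
      -- a zero-laxity active EV must be charged
      have hkey : ∀ i, t < τ i → ∑ s ∈ range t, b i s < d i →
          τ i - t ≤ d i - ∑ s ∈ range t, b i s → b i t = 1 := by
        intro i hti hdi hlax
        by_contra hbi
        have hbi0 : b i t = 0 := by have := hb_bin i t; omega
        have hiA : i ∈ A := by
          simp only [hA, mem_filter, mem_univ, true_and]; exact ⟨hti, hdi⟩
        have hiS : i ∉ S := by simp [hS, hbi0]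
        have hSc : S.card = c := by
          rcases le_or_gt c A.card with h | h
          · omega
          · exfalso
            have hSA' : S = A := eq_of_subset_of_card_le hSA (by omega)
            rw [hSA'] at hiS; exact hiS hiA
        have hzero : ∀ j ∈ S, t < τ j ∧
            d j - ∑ s ∈ range t, b j s = τ j - t := by
          intro j hj
          have hbj : b j t = 1 := by
            simpa only [hS, mem_filter, mem_univ, true_and] using hj
          have hllf := hb_llf t i j ⟨hti, hdi⟩ hbi0 hbj
          rw [hcast i, hcast j] at hllf
          have hjA := hSA hj
          simp only [hA, mem_filter, mem_univ, true_and] at hjA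
          have h1 := hsum_le i t
          have h2 := hsum_le j t
          have h3 := ha j
          exact ⟨hjA.1, by omega⟩
        set Z : Finset ι := insert i S with hZ
        have hiZ : i ∈ Z := mem_insert_self i S
        have hne : Z.Nonempty := ⟨i, hiZ⟩
        have hZprop : ∀ j ∈ Z, t < τ j ∧
            d j - ∑ s ∈ range t, b j s = τ j - t := by
          intro j hj
          rcases mem_insert.mp hj with rfl | hj'
          · exact ⟨hti, by have := ha j; omega⟩
          · exact hzero j hj'
        obtain ⟨j₀, hj₀Z, hj₀⟩ := exists_mem_eq_inf' hne τ
        set T := Z.inf' hne τ with hT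
        have hTt : t < T := by rw [hj₀]; exact (hZprop j₀ hj₀Z).1
        have hge : ∀ j ∈ Z, T - t ≤ (d j - ∑ s ∈ range t, b j s) - (τ j - T) := by
          intro j hj
          have h1 := (hZprop j hj).1
          have h2 := (hZprop j hj).2
          have h3 : T ≤ τ j := inf'_le τ hj
          omega
        have hsum : Z.card * (T - t)
            ≤ ∑ j, ((d j - ∑ s ∈ range t, b j s) - (τ j - T)) := by
          calc Z.card * (T - t) = ∑ _j ∈ Z, (T - t) := by
                rw [sum_const, smul_eq_mul]
            _ ≤ ∑ j ∈ Z, ((d j - ∑ s ∈ range t, b j s) - (τ j - T)) :=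
                sum_le_sum hge
            _ ≤ ∑ j, ((d j - ∑ s ∈ range t, b j s) - (τ j - T)) :=
                sum_le_sum_of_subset (subset_univ Z)
        have hZcard : Z.card = c + 1 := by
          rw [hZ, card_insert_of_notMem hiS, hSc]
        rw [hZcard] at hsum
        have hcon : (c + 1) * (T - t) ≤ c * (T - t) :=
          le_trans hsum (hbd T)
        rw [add_mul, one_mul] at hcon
        omega
      have ha' : ∀ i, d i - ∑ s ∈ range (t + 1), b i s ≤ τ i - (t + 1) := by
        intro i
        rw [sum_range_succ]
        have h0 := hb_bin i t
        have h1 := ha i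
        have h2 := hsum_le i t
        rcases Nat.eq_zero_or_pos (b i t) with hb0 | hb1
        · by_cases hd : ∑ s ∈ range t, b i s < d i
          · by_cases hτ : t < τ i
            · by_cases hlax : τ i - t ≤ d i - ∑ s ∈ range t, b i s
              · have := hkey i hτ hd hlax; omega
              · omega
            · omega
          · omega
        · have := (hb_act i t hb1).1; omega
      refine ⟨ha', ?_⟩
      intro T
      rcases le_or_gt T (t + 1) with hT1 | hT1
      · have hz : ∀ i ∈ (univ : Finset ι),
            (d i - ∑ s ∈ range (t + 1), b i s) - (τ i - T) = 0 := by
          intro i _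
          have := ha' i
          omega
        rw [sum_eq_zero hz]
        exact Nat.zero_le _
      · set P : Finset ι := univ.filter (fun i => b i t = 1 ∧
          0 < (d i - ∑ s ∈ range t, b i s) - (τ i - T)) with hP
        have hsplit : ∑ i, ((d i - ∑ s ∈ range t, b i s) - (τ i - T))
            = ∑ i, ((d i - ∑ s ∈ range (t + 1), b i s) - (τ i - T)) + P.card := by
          rw [hP, card_filter, ← sum_add_distrib]
          apply sum_congr rfl
          intro i _
          rw [sum_range_succ]
          have h2 := hsum_le i t
          by_cases hmem : b i t = 1 ∧
              0 < (d i - ∑ s ∈ range t, b i s) - (τ i - T)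
          · rw [if_pos hmem]
            obtain ⟨h4, h5⟩ := hmem
            have h6 := (hb_act i t (by omega)).2
            omega
          · rw [if_neg hmem]
            rcases Decidable.not_and_iff_or_not.mp hmem with h4 | h4
            · have : b i t = 0 := by have := hb_bin i t; omega
              omega
            · have := hb_bin i t
              omega
        have hPS : P ⊆ S := by
          intro i hi
          simp only [hP, mem_filter, mem_univ, true_and] at hi
          simp only [hS, mem_filter, mem_univ, true_and]
          exact hi.1
        have hkc : P.card ≤ c :=
          le_trans (card_le_card hPS) (by rw [hScard]; exact min_le_left _ _)
        by_cases hk : P.card < c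
        · -- every EV with positive contribution is charged
          have hcover : ∀ j, 0 < (d j - ∑ s ∈ range t, b j s) - (τ j - T) →
              b j t = 1 := by
            intro j hj
            by_contra hbj
            have hbj0 : b j t = 0 := by have := hb_bin j t; omega
            have hjr : 0 < d j - ∑ s ∈ range t, b j s := by omega
            have hjτ : t < τ j := by
              by_contra h
              have := ha j; omega
            have hjd : ∑ s ∈ range t, b j s < d j := by
              have := hsum_le j t; omega
            have hjA : j ∈ A := by
              simp only [hA, mem_filter, mem_univ, true_and]; exact ⟨hjτ, hjd⟩
            have hjS : j ∉ S := by simp [hS, hbj0]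
            have hSc : S.card = c := by
              rcases le_or_gt c A.card with h | h
              · omega
              · exfalso
                have hSA' : S = A := eq_of_subset_of_card_le hSA (by omega)
                rw [hSA'] at hjS; exact hjS hjA
            have hnotsub : ¬ (S ⊆ P) := fun h =>
              absurd (card_le_card h) (by omega)
            obtain ⟨i, hiS, hiP⟩ := not_subset.mp hnotsub
            have hbi : b i t = 1 := by
              simpa only [hS, mem_filter, mem_univ, true_and] using hiS
            have hih : ¬ 0 < (d i - ∑ s ∈ range t, b i s) - (τ i - T) := by
              intro h
              exact hiP (by
                simp only [hP, mem_filter, mem_univ, true_and]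
                exact ⟨hbi, h⟩)
            have hiA := hSA hiS
            simp only [hA, mem_filter, mem_univ, true_and] at hiA
            have hllf := hb_llf t j i ⟨hjτ, hjd⟩ hbj0 hbi
            rw [hcast i, hcast j] at hllf
            have h1 := hsum_le i t
            have h2 := hsum_le j t
            have h3 := ha i
            have h4 := hiA.2
            omega
          have hvanish : ∀ i ∈ (univ : Finset ι), i ∉ P →
              (d i - ∑ s ∈ range t, b i s) - (τ i - T) = 0 := by
            intro i _ hiP
            by_contra h
            have h' : 0 < (d i - ∑ s ∈ range t, b i s) - (τ i - T) :=
              Nat.pos_of_ne_zero h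
            exact hiP (by
              simp only [hP, mem_filter, mem_univ, true_and]
              exact ⟨hcover i h', h'⟩)
          have hPsum : ∑ i, ((d i - ∑ s ∈ range t, b i s) - (τ i - T))
              = ∑ i ∈ P, ((d i - ∑ s ∈ range t, b i s) - (τ i - T)) :=
            (sum_subset (subset_univ P) hvanish).symm
          have hbound : ∀ i ∈ P,
              (d i - ∑ s ∈ range t, b i s) - (τ i - T) ≤ T - t := by
            intro i _
            have := ha i; omega
          have h7 : ∑ i ∈ P, ((d i - ∑ s ∈ range t, b i s) - (τ i - T))
              ≤ P.card * (T - t) := by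
            calc ∑ i ∈ P, ((d i - ∑ s ∈ range t, b i s) - (τ i - T))
                ≤ ∑ _i ∈ P, (T - t) := sum_le_sum hbound
              _ = P.card * (T - t) := by rw [sum_const, smul_eq_mul]
          have e : P.card * (T - t) = P.card * (T - (t + 1)) + P.card := by
            have h8 : T - t = (T - (t + 1)) + 1 := by omega
            rw [h8, mul_add, mul_one]
          have h9 : P.card * (T - (t + 1)) ≤ c * (T - (t + 1)) :=
            Nat.mul_le_mul_right _ (le_of_lt hk)
          linarith [hsplit, hPsum, h7]
        · have hkeq : P.card = c := by omega
          have h6 := hbd T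
          have e : c * (T - t) = c * (T - (t + 1)) + c := by
            have h8 : T - t = (T - (t + 1)) + 1 := by omega
            rw [h8, mul_add, mul_one]
          rw [e] at h6
          linarith [hsplit]
  intro i
  have h := (key (τ i)).1 i
  omega
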